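/- Let P be a symmetric positive definite n×n real matrix with maximal eigenvalue λ. Then γ(θ) = -log det(I - θP) + tr((I - θP)^{-1} - I) tends to +∞ as θ → (1/λ)⁻. -/

import Mathlib

open Matrix

lemma conj_diag {n : ℕ} (P : Matrix (Fin n) (Fin n) ℝ) (hP : P.PosDef) (θ : ℝ) :
    (1 - θ • P) = (hP.1.eigenvectorUnitary : Matrix (Fin n) (Fin n) ℝ) *
      diagonal (fun i => 1 - θ * hP.1.eigenvalues i) *
      star (hP.1.eigenvectorUnitary : Matrix (Fin n) (Fin n) ℝ) := by
  set U : Matrix (Fin n) (Fin n) ℝ := (hP.1.eigenvectorUnitary : Matrix (Fin n) (Fin n) ℝ)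
  have hU : U * star U = 1 := (Matrix.mem_unitaryGroup_iff).mp hP.1.eigenvectorUnitary.2
  have hspec : P = U * diagonal hP.1.eigenvalues * star U := by
    have := hP.1.spectral_theorem
    simpa [RCLike.ofReal_real_eq_id] using this
  have h1 : (diagonal (fun i => 1 - θ * hP.1.eigenvalues i) : Matrix (Fin n) (Fin n) ℝ)
      = 1 - θ • diagonal hP.1.eigenvalues := by
    rw [← diagonal_one, ← diagonal_smul, ← diagonal_sub]
    rfl
  rw [h1, Matrix.mul_sub, Matrix.sub_mul, Matrix.mul_one, hU, Matrix.mul_smul, Matrix.smul_mul,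
    ← hspec]

open Matrix

lemma det_trace_formula {n : ℕ} (P : Matrix (Fin n) (Fin n) ℝ) (hP : P.PosDef) (θ : ℝ)
    (hθ : ∀ i, 1 - θ * hP.1.eigenvalues i ≠ 0) :
    (1 - θ • P).det = ∏ i, (1 - θ * hP.1.eigenvalues i) ∧
    ((1 - θ • P)⁻¹).trace = ∑ i, (1 - θ * hP.1.eigenvalues i)⁻¹ := by
  set U : Matrix (Fin n) (Fin n) ℝ := (hP.1.eigenvectorUnitary : Matrix (Fin n) (Fin n) ℝ)
  have hU : U * star U = 1 := (Matrix.mem_unitaryGroup_iff).mp hP.1.eigenvectorUnitary.2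
  have hU' : star U * U = 1 := (Matrix.mem_unitaryGroup_iff').mp hP.1.eigenvectorUnitary.2
  have hconj := conj_diag P hP θ
  constructor
  · rw [hconj, Matrix.det_mul, Matrix.det_mul, det_diagonal]
    have : U.det * (star U).det = 1 := by rw [← Matrix.det_mul, hU, Matrix.det_one]
    rw [mul_right_comm, this, one_mul]
  · have hinv : (1 - θ • P)⁻¹ = U * diagonal (fun i => (1 - θ * hP.1.eigenvalues i)⁻¹) * star U := by
      apply Matrix.inv_eq_right_inv
      rw [hconj]
      calc U * diagonal (fun i => 1 - θ * hP.1.eigenvalues i) * star U *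
            (U * diagonal (fun i => (1 - θ * hP.1.eigenvalues i)⁻¹) * star U)
          = U * (diagonal (fun i => 1 - θ * hP.1.eigenvalues i) * (star U * U) *
            diagonal (fun i => (1 - θ * hP.1.eigenvalues i)⁻¹)) * star U := by
            simp only [Matrix.mul_assoc]
        _ = 1 := by
            rw [hU', Matrix.mul_one, diagonal_mul_diagonal]
            have : (fun i => (1 - θ * hP.1.eigenvalues i) * (1 - θ * hP.1.eigenvalues i)⁻¹)
                = fun _ => (1 : ℝ) := by
              funext i; exact mul_inv_cancel₀ (hθ i)
            rw [this, diagonal_one, Matrix.mul_one, hU]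
    rw [hinv, Matrix.trace_mul_cycle, hU', Matrix.one_mul, Matrix.trace_diagonal]

/-- γ(θ) = -log det(I - θP) + tr((I - θP)⁻¹ - I) tends to +∞ as θ → (1/λ)⁻. -/
theorem stmt_3 {n : ℕ} (P : Matrix (Fin n) (Fin n) ℝ) (hP : P.PosDef)
    (lam : ℝ) (hlam : IsGreatest (Set.range hP.1.eigenvalues) lam) :
    Filter.Tendsto
      (fun θ : ℝ => -Real.log ((1 - θ • P).det) + Matrix.trace ((1 - θ • P)⁻¹ - 1))
      (nhdsWithin (1 / lam) (Set.Iio (1 / lam))) Filter.atTop := by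
  obtain ⟨⟨i0, hi0⟩, hub⟩ := hlam
  set μ := hP.1.eigenvalues with hμ
  have hμpos : ∀ i, 0 < μ i := fun i => hP.eigenvalues_pos i
  have hlam_pos : 0 < lam := hi0 ▸ hμpos i0
  have hinv_pos : 0 < 1 / lam := by positivity
  -- the lower-bound function tends to atTop
  have h1 : Filter.Tendsto (fun θ : ℝ => 1 - θ * lam)
      (nhdsWithin (1 / lam) (Set.Iio (1 / lam))) (nhdsWithin 0 (Set.Ioi 0)) := by
    rw [tendsto_nhdsWithin_iff]
    constructor
    · have : (1 : ℝ) - (1 / lam) * lam = 0 := by field_simp; ring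
      have hc : Continuous (fun θ : ℝ => 1 - θ * lam) := by continuity
      have := hc.tendsto (1 / lam)
      rw [show (1 : ℝ) - (1 / lam) * lam = 0 by field_simp; ring] at this
      exact this.mono_left nhdsWithin_le_nhds
    · filter_upwards [self_mem_nhdsWithin] with θ (hθ : θ < 1 / lam)
      have : θ * lam < 1 := by
        calc θ * lam < (1 / lam) * lam := by exact mul_lt_mul_of_pos_right hθ hlam_pos
          _ = 1 := by field_simp
      simpa using this
  have hg : Filter.Tendsto (fun θ : ℝ => -Real.log (1 - θ * lam))
      (nhdsWithin (1 / lam) (Set.Iio (1 / lam))) Filter.atTop :=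
    Filter.tendsto_neg_atTop_iff.mpr (Real.tendsto_log_nhdsGT_zero.comp h1)
  apply Filter.tendsto_atTop_mono' _ _ hg
  have hev : ∀ᶠ θ : ℝ in nhdsWithin (1 / lam) (Set.Iio (1 / lam)), 0 < θ ∧ θ < 1 / lam := by
    filter_upwards [self_mem_nhdsWithin,
      nhdsWithin_le_nhds (eventually_gt_nhds hinv_pos)] with θ h2 h3
    exact ⟨h3, h2⟩
  filter_upwards [hev] with θ ⟨hθ0, hθ1⟩
  -- basic facts for this θ
  have hfac : ∀ i, 0 < 1 - θ * μ i := by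
    intro i
    have hle : μ i ≤ lam := hub ⟨i, rfl⟩
    have : θ * μ i < 1 := by
      calc θ * μ i ≤ θ * lam := by nlinarith
        _ < (1 / lam) * lam := by nlinarith
        _ = 1 := by field_simp
    linarith
  have hfac1 : ∀ i, 1 - θ * μ i ≤ 1 := by
    intro i; nlinarith [hμpos i]
  obtain ⟨hdet, htr⟩ := det_trace_formula P hP θ (fun i => ne_of_gt (hfac i))
  -- trace term nonneg
  have htrace_nonneg : 0 ≤ Matrix.trace ((1 - θ • P)⁻¹ - 1) := by
    rw [Matrix.trace_sub, Matrix.trace_one, htr]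
    have : ∀ i ∈ Finset.univ, (1 : ℝ) ≤ (1 - θ * μ i)⁻¹ := fun i _ =>
      (one_le_inv₀ (hfac i)).2 (hfac1 i)
    have hsum : (n : ℝ) ≤ ∑ i, (1 - θ * μ i)⁻¹ := by
      calc (n : ℝ) = ∑ _i : Fin n, (1 : ℝ) := by simp
        _ ≤ _ := Finset.sum_le_sum this
    simpa using hsum
  -- det bound
  have hprod_le : (1 - θ • P).det ≤ 1 - θ * lam := by
    rw [hdet]
    calc ∏ i, (1 - θ * μ i)
        = (1 - θ * μ i0) * ∏ i ∈ Finset.univ.erase i0, (1 - θ * μ i) :=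
          (Finset.mul_prod_erase _ _ (Finset.mem_univ i0)).symm
      _ ≤ (1 - θ * μ i0) * 1 := by
          apply mul_le_mul_of_nonneg_left _ (le_of_lt (hfac i0))
          exact Finset.prod_le_one (fun i _ => le_of_lt (hfac i)) (fun i _ => hfac1 i)
      _ = 1 - θ * lam := by rw [mul_one, hi0]
  have hdet_pos : 0 < (1 - θ • P).det := by
    rw [hdet]; exact Finset.prod_pos (fun i _ => hfac i)
  have hlog : -Real.log (1 - θ * lam) ≤ -Real.log ((1 - θ • P).det) := by
    apply neg_le_neg
    exact Real.log_le_log hdet_pos hprod_le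
  linarith
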